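/- Let X be a Banach space that is 1-complemented in a dual Banach space, i.e., X embeds isometrically into a dual Banach space Y with a norm-one linear projection P : Y → X. Then for every non-principal ultrafilter ω on ℕ, X is 1-complemented in its ultra-completion X_ω: there exists a 1-Lipschitz retraction of X_ω onto X. -/

import Mathlib

open Filter Topology

def IsBddSeq {X : Type*} [MetricSpace X] (x : ℕ → X) : Prop :=
  ∃ C : ℝ, ∀ n, dist (x n) (x 0) ≤ C

noncomputable def uLim (ω : Ultrafilter ℕ) (a : ℕ → ℝ) : ℝ :=
  limUnder (↑ω : Filter ℕ) a

noncomputable def dOm {X : Type*} [MetricSpace X] (ω : Ultrafilter ℕ) (x y : ℕ → X) : ℝ :=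
  uLim ω (fun n => dist (x n) (y n))

/-- A bounded real sequence converges along any ultrafilter. -/
lemma exists_tendsto_of_bdd (ω : Ultrafilter ℕ) (a : ℕ → ℝ) (C : ℝ)
    (hC : ∀ n, |a n| ≤ C) : ∃ L, Tendsto a (↑ω : Filter ℕ) (𝓝 L) := by
  have hmem : ∀ n, a n ∈ Set.Icc (-C) C := fun n => abs_le.mp (hC n)
  have hle : (ω.map a : Filter ℝ) ≤ Filter.principal (Set.Icc (-C) C) :=
    Filter.le_principal_iff.mpr (Filter.mem_map.mpr (Filter.Eventually.of_forall hmem))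
  obtain ⟨L, _, hL⟩ := (isCompact_Icc (a := -C) (b := C)).ultrafilter_le_nhds (ω.map a) hle
  exact ⟨L, hL⟩

/-- If a Banach space `X` is 1-complemented in a dual Banach space—i.e. it embeds
isometrically into the dual `F*` of a Banach space `F` with a norm-one linear projection
`P : F* → X`—then for every non-principal ultrafilter `ω` on ℕ, `X` is 1-complemented in
its ultra-completion `X_ω`: there is a map from bounded sequences to `X` which is
1-Lipschitz for `d_ω` and is the identity on constant sequences. -/
theorem stmt_6 (X : Type*) [NormedAddCommGroup X] [NormedSpace ℝ X] [CompleteSpace X]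
    (F : Type*) [NormedAddCommGroup F] [NormedSpace ℝ F] [CompleteSpace F]
    (ι : X →ₗᵢ[ℝ] (F →L[ℝ] ℝ)) (P : (F →L[ℝ] ℝ) →L[ℝ] X)
    (hP : ‖P‖ ≤ 1) (hPι : ∀ x : X, P (ι x) = x)
    (ω : Ultrafilter ℕ) (hω : (Filter.cofinite : Filter ℕ) ≤ ↑ω) :
    ∃ r : (ℕ → X) → X,
      (∀ x y : ℕ → X, IsBddSeq x → IsBddSeq y → dist (r x) (r y) ≤ dOm ω x y) ∧
      (∀ p : X, r (fun _ => p) = p) := by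
  classical
  set g : (ℕ → X) → ℕ → WeakDual ℝ F :=
    fun x n => StrongDual.toWeakDual (ι (x n)) with hg
  -- the retraction
  set r : (ℕ → X) → X := fun x =>
    if h : ∃ ℓ : WeakDual ℝ F, Tendsto (g x) (↑ω : Filter ℕ) (𝓝 ℓ)
    then P (WeakDual.toStrongDual h.choose) else x 0 with hr
  -- existence of the weak-* limit for bounded sequences
  have hex : ∀ x : ℕ → X, IsBddSeq x →
      ∃ ℓ : WeakDual ℝ F, Tendsto (g x) (↑ω : Filter ℕ) (𝓝 ℓ) := by
    rintro x ⟨C, hC⟩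
    have hmem : ∀ n, g x n ∈
        (WeakDual.toStrongDual ⁻¹' Metric.closedBall 0 (C + ‖x 0‖) :
          Set (WeakDual ℝ F)) := by
      intro n
      simp only [Set.mem_preimage, Metric.mem_closedBall, dist_zero_right]
      have : ‖ι (x n)‖ = ‖x n‖ := ι.norm_map _
      have hxn : ‖x n‖ ≤ C + ‖x 0‖ := by
        have := hC n
        rw [dist_eq_norm] at this
        calc ‖x n‖ ≤ ‖x n - x 0‖ + ‖x 0‖ := by
              simpa using norm_add_le (x n - x 0) (x 0)
          _ ≤ C + ‖x 0‖ := by linarith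
      simpa [g, this] using hxn
    have hle : (ω.map (g x) : Filter (WeakDual ℝ F)) ≤
        Filter.principal (WeakDual.toStrongDual ⁻¹' Metric.closedBall 0 (C + ‖x 0‖)) :=
      Filter.le_principal_iff.mpr (Filter.mem_map.mpr (Filter.Eventually.of_forall hmem))
    obtain ⟨ℓ, _, hℓ⟩ := (WeakDual.isCompact_closedBall (𝕜 := ℝ) (E := F) 0
      (C + ‖x 0‖)).ultrafilter_le_nhds (ω.map (g x)) hle
    exact ⟨ℓ, hℓ⟩
  refine ⟨r, ?_, ?_⟩
  · intro x y hx hy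
    have hxe := hex x hx
    have hye := hex y hy
    set ℓx := hxe.choose with hℓx
    set ℓy := hye.choose with hℓy
    have hℓxt : Tendsto (g x) (↑ω : Filter ℕ) (𝓝 ℓx) := hxe.choose_spec
    have hℓyt : Tendsto (g y) (↑ω : Filter ℕ) (𝓝 ℓy) := hye.choose_spec
    have hrx : r x = P (WeakDual.toStrongDual ℓx) := by simp [hr, dif_pos hxe]; rfl
    have hry : r y = P (WeakDual.toStrongDual ℓy) := by simp [hr, dif_pos hye]; rfl
    -- the distance sequence converges to D := dOm ω x y
    obtain ⟨Cx, hCx⟩ := hx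
    obtain ⟨Cy, hCy⟩ := hy
    have hbdd : ∀ n, |dist (x n) (y n)| ≤ Cx + Cy + dist (x 0) (y 0) := by
      intro n
      rw [abs_of_nonneg dist_nonneg]
      calc dist (x n) (y n) ≤ dist (x n) (x 0) + dist (x 0) (y 0) + dist (y 0) (y n) :=
            dist_triangle4 _ _ _ _
        _ ≤ Cx + dist (x 0) (y 0) + Cy := by
            have := hCy n; rw [dist_comm] at this
            have := hCx n; gcongr <;> first | exact hCx n | assumption
        _ = Cx + Cy + dist (x 0) (y 0) := by ring
    obtain ⟨D, hD⟩ := exists_tendsto_of_bdd ω (fun n => dist (x n) (y n)) _ hbdd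
    have hDval : dOm ω x y = D := hD.limUnder_eq
    have hD0 : 0 ≤ D :=
      le_of_tendsto_of_tendsto' tendsto_const_nhds hD (fun n => dist_nonneg)
    -- norm estimate on ℓx - ℓy
    have hnorm : ‖WeakDual.toStrongDual ℓx - WeakDual.toStrongDual ℓy‖ ≤ D := by
      apply ContinuousLinearMap.opNorm_le_bound _ hD0
      intro f
      have hxf : Tendsto (fun n => ι (x n) f) (↑ω : Filter ℕ) (𝓝 (ℓx f)) :=
        ((WeakBilin.eval_continuous _ f).tendsto ℓx).comp hℓxt
      have hyf : Tendsto (fun n => ι (y n) f) (↑ω : Filter ℕ) (𝓝 (ℓy f)) :=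
        ((WeakBilin.eval_continuous _ f).tendsto ℓy).comp hℓyt
      have hsub : Tendsto (fun n => ι (x n) f - ι (y n) f) (↑ω : Filter ℕ)
          (𝓝 (ℓx f - ℓy f)) := hxf.sub hyf
      have habs : Tendsto (fun n => |ι (x n) f - ι (y n) f|) (↑ω : Filter ℕ)
          (𝓝 |ℓx f - ℓy f|) := hsub.abs
      have hmul : Tendsto (fun n => dist (x n) (y n) * ‖f‖) (↑ω : Filter ℕ)
          (𝓝 (D * ‖f‖)) := hD.mul_const _
      have hle : |ℓx f - ℓy f| ≤ D * ‖f‖ := by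
        refine le_of_tendsto_of_tendsto' habs hmul (fun n => ?_)
        have : ι (x n) f - ι (y n) f = (ι (x n) - ι (y n)) f := by simp
        rw [this]
        calc |(ι (x n) - ι (y n)) f| ≤ ‖ι (x n) - ι (y n)‖ * ‖f‖ := by
              simpa using (ι (x n) - ι (y n)).le_opNorm f
          _ = dist (x n) (y n) * ‖f‖ := by
              rw [← map_sub, ι.norm_map, ← dist_eq_norm]
        done
      simpa using hle
    rw [hrx, hry, hDval, dist_eq_norm, ← map_sub]
    calc ‖P (WeakDual.toStrongDual ℓx - WeakDual.toStrongDual ℓy)‖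
        ≤ ‖P‖ * ‖WeakDual.toStrongDual ℓx - WeakDual.toStrongDual ℓy‖ := P.le_opNorm _
      _ ≤ 1 * D := by gcongr
      _ = D := one_mul D
  · intro p
    have hconst : ∃ ℓ : WeakDual ℝ F,
        Tendsto (g (fun _ => p)) (↑ω : Filter ℕ) (𝓝 ℓ) :=
      ⟨StrongDual.toWeakDual (ι p), tendsto_const_nhds⟩
    have hch : hconst.choose = StrongDual.toWeakDual (ι p) :=
      tendsto_nhds_unique hconst.choose_spec tendsto_const_nhds
    simp only [hr, dif_pos hconst, hch]
    simpa using hPι p
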